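/- Equipartition of energy for the leading-order interface profile: let γ > 0, let ψ₀ : ℝ^N → ℝ be continuously differentiable, let Φ : ℝ → ℝ^N be twice continuously differentiable, and let F : ℝ → ℝ^N be a function such that for every z ∈ ℝ one has γ Φ''(z) = γ ∇ψ₀(Φ(z)) − F(z) and F(z)·Φ'(z) = 0. Assume moreover that Φ'(z) → 0 and ψ₀(Φ(z)) → 0 as z → −∞. Then |Φ'(z)|² = 2 ψ₀(Φ(z)) for every z ∈ ℝ. -/

import Mathlib

open Filter

/-- Equipartition of energy for the leading-order interface profile:
if `γ > 0`, `ψ₀ ∈ C¹(ℝ^N)`, `Φ ∈ C²(ℝ;ℝ^N)` and `F : ℝ → ℝ^N` satisfy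
`γ Φ''(z) = γ ∇ψ₀(Φ(z)) - F(z)` and `F(z)·Φ'(z) = 0` for all `z`, and if
`Φ'(z) → 0` and `ψ₀(Φ(z)) → 0` as `z → -∞`, then `|Φ'(z)|² = 2 ψ₀(Φ(z))` for all `z`. -/
theorem equipartition_of_energy (N : ℕ) (γ : ℝ) (hγ : 0 < γ)
    (ψ₀ : EuclideanSpace ℝ (Fin N) → ℝ) (hψ₀ : ContDiff ℝ 1 ψ₀)
    (Φ : ℝ → EuclideanSpace ℝ (Fin N)) (hΦ : ContDiff ℝ 2 Φ)
    (F : ℝ → EuclideanSpace ℝ (Fin N))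
    (hode : ∀ z : ℝ, γ • deriv (deriv Φ) z = γ • gradient ψ₀ (Φ z) - F z)
    (horth : ∀ z : ℝ, (inner ℝ (F z) (deriv Φ z) : ℝ) = 0)
    (hlim1 : Tendsto (fun z => deriv Φ z) atBot (nhds 0))
    (hlim2 : Tendsto (fun z => ψ₀ (Φ z)) atBot (nhds 0)) :
    ∀ z : ℝ, ‖deriv Φ z‖ ^ 2 = 2 * ψ₀ (Φ z) := by
  have hΦ1 : Differentiable ℝ Φ := hΦ.differentiable (by norm_num)
  have hΦ' : Differentiable ℝ (deriv Φ) := by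
    have h2 : ContDiff ℝ ((1 : ℕ) + 1) Φ := by exact_mod_cast hΦ
    exact ((contDiff_succ_iff_deriv).mp h2).2.2.differentiable (by norm_num)
  set E : ℝ → ℝ := fun z => ‖deriv Φ z‖ ^ 2 - 2 * ψ₀ (Φ z) with hEdef
  have hEderiv : ∀ z, HasDerivAt E 0 z := by
    intro z
    have h1 : HasDerivAt (deriv Φ) (deriv (deriv Φ) z) z := (hΦ' z).hasDerivAt
    have h2 : HasDerivAt (fun z => (inner ℝ (deriv Φ z) (deriv Φ z) : ℝ))
        (inner ℝ (deriv Φ z) (deriv (deriv Φ) z) + inner ℝ (deriv (deriv Φ) z) (deriv Φ z)) z :=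
      h1.inner ℝ h1
    have hgrad : HasGradientAt ψ₀ (gradient ψ₀ (Φ z)) (Φ z) :=
      (hψ₀.differentiable (by norm_num) (Φ z)).hasGradientAt
    have h3 : HasDerivAt (fun z => ψ₀ (Φ z))
        (inner ℝ (gradient ψ₀ (Φ z)) (deriv Φ z) : ℝ) z := by
      have := hgrad.hasFDerivAt.comp_hasDerivAt z (hΦ1 z).hasDerivAt
      exact this
    have hdd : deriv (deriv Φ) z = gradient ψ₀ (Φ z) - γ⁻¹ • F z := by
      have := hode z
      have h := congrArg (fun v => γ⁻¹ • v) this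
      simp only [smul_smul, inv_mul_cancel₀ hγ.ne', one_smul, smul_sub] at h
      rw [h]
    have hkey : (inner ℝ (deriv (deriv Φ) z) (deriv Φ z) : ℝ)
        = inner ℝ (gradient ψ₀ (Φ z)) (deriv Φ z) := by
      rw [hdd, inner_sub_left, real_inner_smul_left, horth z]
      ring
    have h2' : HasDerivAt (fun z => (‖deriv Φ z‖ ^ 2 : ℝ))
        (inner ℝ (deriv Φ z) (deriv (deriv Φ) z) + inner ℝ (deriv (deriv Φ) z) (deriv Φ z)) z := by
      simpa only [real_inner_self_eq_norm_sq] using h2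
    have hE : HasDerivAt E
        ((inner ℝ (deriv Φ z) (deriv (deriv Φ) z) + inner ℝ (deriv (deriv Φ) z) (deriv Φ z))
          - 2 * inner ℝ (gradient ψ₀ (Φ z)) (deriv Φ z)) z := h2'.sub (h3.const_mul 2)
    have hzero : (inner ℝ (deriv Φ z) (deriv (deriv Φ) z) + inner ℝ (deriv (deriv Φ) z) (deriv Φ z))
          - 2 * (inner ℝ (gradient ψ₀ (Φ z)) (deriv Φ z) : ℝ) = 0 := by
      have hkey' : (inner ℝ (deriv Φ z) (deriv (deriv Φ) z) : ℝ)
          = inner ℝ (gradient ψ₀ (Φ z)) (deriv Φ z) :=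
        (real_inner_comm _ _).trans hkey
      rw [hkey, hkey']; ring
    rwa [hzero] at hE
  have hconst : ∀ z : ℝ, E z = E 0 := by
    intro z
    exact is_const_of_deriv_eq_zero (fun x => (hEderiv x).differentiableAt)
      (fun x => (hEderiv x).deriv) z 0
  have hlimE : Tendsto E atBot (nhds 0) := by
    have h1 : Tendsto (fun z => ‖deriv Φ z‖ ^ 2) atBot (nhds 0) := by
      have := (hlim1.norm.pow 2)
      simpa using this
    have h2 : Tendsto (fun z => 2 * ψ₀ (Φ z)) atBot (nhds 0) := by
      have := hlim2.const_mul 2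
      simpa using this
    simpa using h1.sub h2
  have hlimE' : Tendsto E atBot (nhds (E 0)) := by
    have : E = fun _ => E 0 := funext hconst
    rw [this]; exact tendsto_const_nhds
  have hE0 : E 0 = 0 := tendsto_nhds_unique hlimE' hlimE
  intro z
  have := (hconst z).trans hE0
  simp only [hEdef] at this
  linarith
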